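/- Let v = (1 + i + j + k)/2. Then for all a, b in the binary tetrahedral group 𝐓 such that a * star b ∈ {±1, ±i, ±j, ±k} (i.e. a and b lie in the same coset of the quaternion group 𝐃₂ in 𝐓), one has re(a * v * star b) ≤ 1/2, with equality when a = b = 1. Consequently, the distance in the orbit space of S³ under the group (𝐓/𝐃₂; 𝐓/𝐃₂) = {q ↦ a·q·b⁻¹ : a, b ∈ 𝐓, a𝐃₂ = b𝐃₂} between the orbit of 1 and the orbit of v is exactly π/3, so the diameter of this orbit space is at least π/3. -/

import Mathlib

open Quaternion Real

noncomputable section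

/-- The quaternion `i`. -/
def qi : ℍ[ℝ] := ⟨0, 1, 0, 0⟩
/-- The quaternion `j`. -/
def qj : ℍ[ℝ] := ⟨0, 0, 1, 0⟩
/-- The quaternion `k`. -/
def qk : ℍ[ℝ] := ⟨0, 0, 0, 1⟩

/-- The quaternion group `𝐃₂ = {±1, ±i, ±j, ±k}`. -/
def binD2 : Set ℍ[ℝ] := ({1, -1, qi, -qi, qj, -qj, qk, -qk} : Set ℍ[ℝ])

/-- The binary tetrahedral group `𝐓 = {±1, ±i, ±j, ±k} ∪ {(±1 ± i ± j ± k)/2}`. -/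
def binT : Set ℍ[ℝ] :=
  binD2 ∪
    {q | ∃ s₁ s₂ s₃ s₄ : ℝ, (s₁ = 1 ∨ s₁ = -1) ∧ (s₂ = 1 ∨ s₂ = -1) ∧
      (s₃ = 1 ∨ s₃ = -1) ∧ (s₄ = 1 ∨ s₄ = -1) ∧
      q = (⟨s₁ / 2, s₂ / 2, s₃ / 2, s₄ / 2⟩ : ℍ[ℝ])}

/-- The unit quaternion `v = (1 + i + j + k)/2`. -/
def vTD2 : ℍ[ℝ] := ⟨1 / 2, 1 / 2, 1 / 2, 1 / 2⟩

/-- Every element of `𝐓` is a unit quaternion: `star b * b = 1`. -/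
lemma binT_star_mul {b : ℍ[ℝ]} (hb : b ∈ binT) : star b * b = 1 := by
  simp only [binT, binD2, Set.mem_union, Set.mem_insert_iff, Set.mem_singleton_iff,
    Set.mem_setOf_eq] at hb
  rcases hb with hb | ⟨s₁, s₂, s₃, s₄, h₁, h₂, h₃, h₄, hq⟩
  · rcases hb with rfl|rfl|rfl|rfl|rfl|rfl|rfl|rfl <;>
      · apply Quaternion.ext <;>
          simp only [Quaternion.re_mul, Quaternion.imI_mul, Quaternion.imJ_mul,
            Quaternion.imK_mul, Quaternion.re_star, Quaternion.imI_star, Quaternion.imJ_star,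
            Quaternion.imK_star, Quaternion.re_neg, Quaternion.imI_neg,
            Quaternion.imJ_neg, Quaternion.imK_neg, Quaternion.re_one, Quaternion.imI_one,
            Quaternion.imJ_one, Quaternion.imK_one] <;> norm_num [qi, qj, qk]
  · rcases h₁ with rfl|rfl <;> rcases h₂ with rfl|rfl <;> rcases h₃ with rfl|rfl <;>
      rcases h₄ with rfl|rfl <;>
      · apply Quaternion.ext <;>
          simp only [Quaternion.re_mul, Quaternion.imI_mul, Quaternion.imJ_mul,
            Quaternion.imK_mul, Quaternion.re_star, Quaternion.imI_star, Quaternion.imJ_star,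
            Quaternion.imK_star, Quaternion.re_one, Quaternion.imI_one,
            Quaternion.imJ_one, Quaternion.imK_one] <;> norm_num [hq]

/-- For `b ∈ 𝐓`, all four coordinates of `b · v · b⁻¹` are at most `1/2` in absolute value. -/
lemma binT_conj_bound {b : ℍ[ℝ]} (hb : b ∈ binT) :
    |(b * vTD2 * star b).re| ≤ 1/2 ∧ |(b * vTD2 * star b).imI| ≤ 1/2 ∧
    |(b * vTD2 * star b).imJ| ≤ 1/2 ∧ |(b * vTD2 * star b).imK| ≤ 1/2 := by
  simp only [binT, binD2, Set.mem_union, Set.mem_insert_iff, Set.mem_singleton_iff,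
    Set.mem_setOf_eq] at hb
  rcases hb with hb | ⟨s₁, s₂, s₃, s₄, h₁, h₂, h₃, h₄, hq⟩
  · rcases hb with rfl|rfl|rfl|rfl|rfl|rfl|rfl|rfl <;>
      · simp only [Quaternion.re_mul, Quaternion.imI_mul, Quaternion.imJ_mul,
          Quaternion.imK_mul, Quaternion.re_star, Quaternion.imI_star, Quaternion.imJ_star,
          Quaternion.imK_star, Quaternion.re_neg, Quaternion.imI_neg,
          Quaternion.imJ_neg, Quaternion.imK_neg, Quaternion.re_one, Quaternion.imI_one,
          Quaternion.imJ_one, Quaternion.imK_one]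
        norm_num [abs_le, qi, qj, qk, vTD2]
  · rcases h₁ with rfl|rfl <;> rcases h₂ with rfl|rfl <;> rcases h₃ with rfl|rfl <;>
      rcases h₄ with rfl|rfl <;>
      · simp only [Quaternion.re_mul, Quaternion.imI_mul, Quaternion.imJ_mul,
          Quaternion.imK_mul, Quaternion.re_star, Quaternion.imI_star, Quaternion.imJ_star,
          Quaternion.imK_star]
        norm_num [abs_le, hq, vTD2]

/-- The key bound: `|re(a·v·b⁻¹)| ≤ 1/2` when `a, b ∈ 𝐓` lie in the same coset of `𝐃₂`. -/
lemma key_bound {a b : ℍ[ℝ]} (ha : a ∈ binT) (hb : b ∈ binT) (hd : a * star b ∈ binD2) :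
    |(a * vTD2 * star b).re| ≤ 1/2 := by
  obtain ⟨h1, h2, h3, h4⟩ := binT_conj_bound hb
  have hb1 := binT_star_mul hb
  have heq : a * vTD2 * star b = (a * star b) * (b * vTD2 * star b) := by
    have : (a * star b) * (b * vTD2 * star b) = a * ((star b * b) * (vTD2 * star b)) := by
      simp only [mul_assoc]
    rw [this, hb1, one_mul, ← mul_assoc]
  rw [heq]
  set w := b * vTD2 * star b with hw
  rw [abs_le] at h1 h2 h3 h4 ⊢
  simp only [binD2, Set.mem_insert_iff, Set.mem_singleton_iff] at hd
  rcases hd with h|h|h|h|h|h|h|h <;> rw [h] <;>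
    simp only [Quaternion.re_mul, Quaternion.re_neg, Quaternion.imI_neg,
      Quaternion.imJ_neg, Quaternion.imK_neg, Quaternion.re_one, Quaternion.imI_one,
      Quaternion.imJ_one, Quaternion.imK_one] <;>
    norm_num [qi, qj, qk] <;> constructor <;> linarith

lemma one_mem_binT : (1 : ℍ[ℝ]) ∈ binT := by
  left; simp only [binD2, Set.mem_insert_iff, Set.mem_singleton_iff]; tauto

lemma one_mem_binD2 : (1 : ℍ[ℝ]) ∈ binD2 := by
  simp only [binD2, Set.mem_insert_iff, Set.mem_singleton_iff]; tauto

lemma arccos_anti {x y : ℝ} (h : x ≤ y) : Real.arccos y ≤ Real.arccos x := by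
  simp only [Real.arccos_eq_pi_div_two_sub_arcsin]
  linarith [Real.monotone_arcsin h]

lemma arccos_half : Real.arccos (1/2) = π/3 := by
  rw [← Real.cos_pi_div_three, Real.arccos_cos (by positivity) (by linarith [Real.pi_pos])]

lemma re_one_v : ((1 : ℍ[ℝ]) * vTD2 * star (1 : ℍ[ℝ])).re = 1 / 2 := by
  rw [one_mul, star_one, mul_one]; rfl

lemma sInf_S : sInf {t : ℝ | ∃ a ∈ binT, ∃ b ∈ binT, a * star b ∈ binD2 ∧
    t = Real.arccos ((a * vTD2 * star b).re)} = π / 3 := by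
  have hmem : π/3 ∈ {t : ℝ | ∃ a ∈ binT, ∃ b ∈ binT, a * star b ∈ binD2 ∧
      t = Real.arccos ((a * vTD2 * star b).re)} := by
    refine ⟨1, one_mem_binT, 1, one_mem_binT, by simpa using one_mem_binD2, ?_⟩
    rw [re_one_v, arccos_half]
  refine le_antisymm (csInf_le ⟨0, ?_⟩ hmem) (le_csInf ⟨_, hmem⟩ ?_)
  · rintro t ⟨a, ha, b, hb, hd, rfl⟩
    exact Real.arccos_nonneg _
  · rintro t ⟨a, ha, b, hb, hd, rfl⟩
    rw [← arccos_half]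
    exact arccos_anti ((abs_le.mp (key_bound ha hb hd)).2)

lemma norm_v : ‖vTD2‖ = 1 := by
  have h : normSq vTD2 = 1 := by
    rw [Quaternion.normSq_def']; norm_num [vTD2]
  have h2 := Quaternion.normSq_eq_norm_mul_self vTD2
  nlinarith [norm_nonneg vTD2]

/-- For `v = (1+i+j+k)/2`: `re(a·v·b⁻¹) ≤ 1/2` for all `a, b ∈ 𝐓` with
`a·b⁻¹ ∈ 𝐃₂` (same coset of `𝐃₂` in `𝐓`), with equality at `a = b = 1`; hence the
distance between the orbits of `1` and `v` under the group `(𝐓/𝐃₂; 𝐓/𝐃₂)` is exactly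
`π/3`, and the diameter of that orbit space is at least `π/3`. -/
theorem binaryTetrahedral_mod_D2_vertex_distance :
    (∀ a ∈ binT, ∀ b ∈ binT, a * star b ∈ binD2 →
        (a * vTD2 * star b).re ≤ 1 / 2) ∧
    ((1 : ℍ[ℝ]) * vTD2 * star (1 : ℍ[ℝ])).re = 1 / 2 ∧
    sInf {t : ℝ | ∃ a ∈ binT, ∃ b ∈ binT, a * star b ∈ binD2 ∧
        t = Real.arccos ((a * vTD2 * star b).re)} = π / 3 ∧
    sSup {d : ℝ | ∃ x y : ℍ[ℝ], ‖x‖ = 1 ∧ ‖y‖ = 1 ∧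
        d = sInf {t : ℝ | ∃ a ∈ binT, ∃ b ∈ binT, a * star b ∈ binD2 ∧
          t = Real.arccos ((a * x * star b * star y).re)}} ≥ π / 3 := by
  refine ⟨fun a ha b hb hd => (abs_le.mp (key_bound ha hb hd)).2, re_one_v, sInf_S, ?_⟩
  have hmem : π/3 ∈ {d : ℝ | ∃ x y : ℍ[ℝ], ‖x‖ = 1 ∧ ‖y‖ = 1 ∧
      d = sInf {t : ℝ | ∃ a ∈ binT, ∃ b ∈ binT, a * star b ∈ binD2 ∧
        t = Real.arccos ((a * x * star b * star y).re)}} := by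
    refine ⟨vTD2, 1, norm_v, norm_one, ?_⟩
    rw [← sInf_S]
    congr 1
    ext t
    simp only [star_one, mul_one]
  refine le_csSup ⟨π, ?_⟩ hmem
  rintro d ⟨x, y, hx, hy, rfl⟩
  refine csInf_le_of_le ⟨0, ?_⟩
    (⟨1, one_mem_binT, 1, one_mem_binT, by simpa using one_mem_binD2, rfl⟩)
    (Real.arccos_le_pi _)
  rintro t ⟨a, ha, b, hb, hd, rfl⟩
  exact Real.arccos_nonneg _

end
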